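/- Let θ ∈ (0, π/2) and r ∈ (0,1), and define r_b := cos²θ*(1-r)/(cos²θ + r*sin²θ) and r_d := sin²θ*(1-r)/(sin²θ + r*cos²θ). Then r_b + r_d = 1 if and only if r = sin(2θ)/(2 + sin(2θ)). -/
import Mathlib


/-- **Mutual tangency of the two adjacent horospheres.**
Let `θ ∈ (0, π/2)` and `r ∈ (0,1)`, and define
`r_b := cos²θ*(1-r)/(cos²θ + r*sin²θ)` and `r_d := sin²θ*(1-r)/(sin²θ + r*cos²θ)`.
Then `r_b + r_d = 1` if and only if `r = sin(2θ)/(2 + sin(2θ))`. -/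
theorem adjacent_horospheres_tangent_iff (θ r : ℝ)
    (hθ : θ ∈ Set.Ioo 0 (Real.pi / 2)) (hr : r ∈ Set.Ioo (0 : ℝ) 1) :
    Real.cos θ ^ 2 * (1 - r) / (Real.cos θ ^ 2 + r * Real.sin θ ^ 2) +
        Real.sin θ ^ 2 * (1 - r) / (Real.sin θ ^ 2 + r * Real.cos θ ^ 2) = 1 ↔
      r = Real.sin (2 * θ) / (2 + Real.sin (2 * θ)) := by
  obtain ⟨hθ0, hθ1⟩ := hθ
  obtain ⟨hr0, hr1⟩ := hr
  set s := Real.sin θ with hs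
  set c := Real.cos θ with hc
  have hs0 : 0 < s := Real.sin_pos_of_pos_of_lt_pi hθ0 (by linarith [Real.pi_pos])
  have hc0 : 0 < c := Real.cos_pos_of_mem_Ioo ⟨by linarith [Real.pi_pos], hθ1⟩
  have hpyth : s ^ 2 + c ^ 2 = 1 := Real.sin_sq_add_cos_sq θ
  have h1 : (0:ℝ) < c ^ 2 + r * s ^ 2 := by positivity
  have h2 : (0:ℝ) < s ^ 2 + r * c ^ 2 := by positivity
  have h3 : (0:ℝ) < 2 + 2 * s * c := by positivity
  rw [Real.sin_two_mul, div_add_div _ _ h1.ne' h2.ne',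
    div_eq_one_iff_eq (mul_pos h1 h2).ne',
    eq_div_iff (by linarith : (2 + 2 * s * c) ≠ 0)]
  constructor
  · intro h
    have hsq : (s * c * (1 - r)) ^ 2 = r ^ 2 := by
      linear_combination h + (r ^ 2 * (s ^ 2 + c ^ 2 + 1)) * hpyth
    have heq : s * c * (1 - r) = r :=
      (sq_eq_sq₀ (mul_nonneg (mul_pos hs0 hc0).le (by linarith)) hr0.le).mp hsq
    linear_combination -2 * heq
  · intro h
    have heq : s * c * (1 - r) = r := by linear_combination -h / 2
    have hsq : (s * c * (1 - r)) ^ 2 = r ^ 2 := by rw [heq]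
    linear_combination hsq + (-(r ^ 2) * (s ^ 2 + c ^ 2 + 1)) * hpyth
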